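/- For every odd n ≥ 3 and every two-element subset D of {0,1,…,n−1}, the unidirectional oriented cycle C⃗_n is D-antimagic. -/
import Mathlib


open scoped Classical

/-- There is a directed walk of length `k` from `u` to `v` in the digraph with arc relation `A`. -/
def WalkLen {V : Type*} (A : V → V → Prop) : ℕ → V → V → Prop
  | 0, u, v => u = v
  | k + 1, u, v => ∃ w, A u w ∧ WalkLen A k w v

/-- The directed distance from `u` to `v` is exactly `k`
(i.e. `k` is the length of a shortest directed path from `u` to `v`). -/
def HasDist {V : Type*} (A : V → V → Prop) (u v : V) (k : ℕ) : Prop :=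
  WalkLen A k u v ∧ ∀ m < k, ¬ WalkLen A m u v

/-- `y` belongs to the `D`-neighborhood of `v`: the distance from `v` to `y` lies in `D`. -/
def InDNbhd {V : Type*} (A : V → V → Prop) (D : Set ℕ) (v y : V) : Prop :=
  ∃ k ∈ D, HasDist A v y k

/-- The `D`-weight of `v` under the labeling `f`: the sum of labels of the `D`-neighbors. -/
noncomputable def dWeight {V : Type*} [Fintype V] (A : V → V → Prop) (D : Set ℕ)
    (f : V → ℕ) (v : V) : ℕ :=
  ∑ y : V, if InDNbhd A D v y then f y else 0

/-- The digraph `(V, A)` is `D`-antimagic: some bijective labeling of the vertices by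
`1, …, |V|` gives pairwise distinct `D`-weights. -/
def DAntimagic (V : Type*) [Fintype V] (A : V → V → Prop) (D : Set ℕ) : Prop :=
  ∃ f : V ≃ Fin (Fintype.card V),
    Function.Injective fun v => dWeight A D (fun y => (f y : ℕ) + 1) v

/-- The orientation of the cycle `C_n` determined by `σ`: the edge between vertex `i` and
vertex `(i+1) mod n` is directed `i → i+1` when `σ i = true`, and `i+1 → i` otherwise. -/
def cycleArc (n : ℕ) (σ : Fin n → Bool) (u v : Fin n) : Prop :=
  (σ u = true ∧ (v : ℕ) = ((u : ℕ) + 1) % n) ∨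
  (σ v = false ∧ (u : ℕ) = ((v : ℕ) + 1) % n)

/-- The arc relation of the unidirectional oriented cycle `C⃗_n`: arcs `i → (i+1) mod n`. -/
def uniArc (n : ℕ) (u v : Fin n) : Prop :=
  (v : ℕ) = ((u : ℕ) + 1) % n

/-- An orientation of `C_n` is unidirectional if all edges are directed the same way around. -/
def Unidirectional (n : ℕ) (σ : Fin n → Bool) : Prop :=
  (∀ i, σ i = true) ∨ (∀ i, σ i = false)

/-- A sink: a vertex of out-degree 0. -/
def IsSink {V : Type*} (A : V → V → Prop) (u : V) : Prop :=
  ∀ v, ¬ A u v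

/-- A source: a vertex of in-degree 0. -/
def IsSource {V : Type*} (A : V → V → Prop) (u : V) : Prop :=
  ∀ v, ¬ A v u

/-- A digraph is Θ-oriented if it has exactly one sink and exactly one source, and
they are adjacent (so the arc between them goes from the source to the sink). -/
def ThetaOriented {V : Type*} (A : V → V → Prop) : Prop :=
  ∃ s t, IsSink A s ∧ IsSource A t ∧ (∀ u, IsSink A u → u = s) ∧
    (∀ u, IsSource A u → u = t) ∧ A t s

/-- The arc relation of the Θ-oriented cycle on `Fin n`:
arcs `i → i+1` for `0 ≤ i ≤ n-2`, together with the arc `0 → n-1`. -/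
def thetaArc (n : ℕ) (u v : Fin n) : Prop :=
  ((v : ℕ) = (u : ℕ) + 1) ∨ ((u : ℕ) = 0 ∧ (v : ℕ) = n - 1)

/-- The arc relation of a disjoint union of `c` oriented cycles, the `j`-th component having
`len j` vertices and arc relation `A j`. -/
def unionArc (c : ℕ) (len : Fin c → ℕ)
    (A : ∀ j, Fin (len j) → Fin (len j) → Prop)
    (u v : Σ j, Fin (len j)) : Prop :=
  ∃ h : u.1 = v.1, A v.1 (Fin.cast (congrArg len h) u.2) v.2

lemma uni_walk_iff (n : ℕ) (hn0 : 0 < n) (k : ℕ) (u v : Fin n) :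
    WalkLen (uniArc n) k u v ↔ (v : ℕ) = ((u : ℕ) + k) % n := by
  induction k generalizing u with
  | zero =>
      simp only [WalkLen, Nat.add_zero, Nat.mod_eq_of_lt u.isLt, Fin.ext_iff]
      exact eq_comm
  | succ k ih =>
      constructor
      · rintro ⟨w, hw, hwalk⟩
        have h1 : (w : ℕ) = ((u : ℕ) + 1) % n := hw
        have h2 : (v : ℕ) = ((w : ℕ) + k) % n := (ih w).mp hwalk
        have h3 : (((u : ℕ) + 1) % n + k) % n = ((u : ℕ) + 1 + k) % n :=
          (Nat.mod_modEq ((u : ℕ) + 1) n).add_right k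
        rw [h2, h1, h3]
        ring_nf
      · intro h
        refine ⟨⟨((u : ℕ) + 1) % n, Nat.mod_lt _ hn0⟩, rfl, (ih _).mpr ?_⟩
        have h3 : (((u : ℕ) + 1) % n + k) % n = ((u : ℕ) + 1 + k) % n :=
          (Nat.mod_modEq ((u : ℕ) + 1) n).add_right k
        rw [h, h3]
        ring_nf

lemma uni_hasDist_iff (n : ℕ) (hn0 : 0 < n) (k : ℕ) (hk : k < n) (u v : Fin n) :
    HasDist (uniArc n) u v k ↔ (v : ℕ) = ((u : ℕ) + k) % n := by
  constructor
  · intro h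
    exact (uni_walk_iff n hn0 k u v).mp h.1
  · intro h
    refine ⟨(uni_walk_iff n hn0 k u v).mpr h, fun m hm hw => ?_⟩
    have h2 : (v : ℕ) = ((u : ℕ) + m) % n := (uni_walk_iff n hn0 m u v).mp hw
    have h3 : ((u : ℕ) + m) % n = ((u : ℕ) + k) % n := h2.symm.trans h
    have h4 : m % n = k % n := Nat.ModEq.add_left_cancel' (u : ℕ) h3
    rw [Nat.mod_eq_of_lt (lt_trans hm hk), Nat.mod_eq_of_lt hk] at h4
    omega

/-- For every odd `n ≥ 3` and every two-element `D ⊆ {0, …, n-1}`, the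
unidirectional `C⃗_n` is `D`-antimagic. -/
theorem uni_odd_antimagic_card_two (n : ℕ) (hn : 3 ≤ n) (hodd : Odd n) (D : Set ℕ)
    (hsub : D ⊆ {m : ℕ | m < n}) (hcard : D.ncard = 2) :
    DAntimagic (Fin n) (uniArc n) D := by
  have hn0 : 0 < n := by omega
  obtain ⟨a, b, hab, hD⟩ := Set.ncard_eq_two.mp hcard
  have ha : a < n := hsub (by rw [hD]; exact Set.mem_insert a {b})
  have hb : b < n := hsub (by rw [hD]; exact Set.mem_insert_iff.mpr (Or.inr rfl))
  refine ⟨finCongr (Fintype.card_fin n).symm, ?_⟩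
  set f : Fin n → ℕ := fun y => ((finCongr (Fintype.card_fin n).symm y : ℕ)) + 1 with hf
  have hfval : ∀ y : Fin n, f y = (y : ℕ) + 1 := fun y => by simp [hf]
  -- compute the weight
  have hweight : ∀ v : Fin n,
      dWeight (uniArc n) D f v = (((v : ℕ) + a) % n + 1) + (((v : ℕ) + b) % n + 1) := by
    intro v
    set ya : Fin n := ⟨((v : ℕ) + a) % n, Nat.mod_lt _ hn0⟩ with hya
    set yb : Fin n := ⟨((v : ℕ) + b) % n, Nat.mod_lt _ hn0⟩ with hyb
    have hyane : ya ≠ yb := by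
      intro hEq
      have h1 : ((v : ℕ) + a) % n = ((v : ℕ) + b) % n := congrArg Fin.val hEq
      have h2 : a % n = b % n := Nat.ModEq.add_left_cancel' (v : ℕ) h1
      rw [Nat.mod_eq_of_lt ha, Nat.mod_eq_of_lt hb] at h2
      exact hab h2
    have hmem : ∀ y : Fin n, InDNbhd (uniArc n) D v y ↔ (y = ya ∨ y = yb) := by
      intro y
      constructor
      · rintro ⟨k, hkD, hdist⟩
        have hkn : k < n := hsub hkD
        have hyval : (y : ℕ) = ((v : ℕ) + k) % n := (uni_hasDist_iff n hn0 k hkn v y).mp hdist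
        rw [hD] at hkD
        rcases hkD with rfl | rfl
        · exact Or.inl (Fin.ext hyval)
        · exact Or.inr (Fin.ext hyval)
      · rintro (rfl | rfl)
        · exact ⟨a, by rw [hD]; exact Set.mem_insert a {b},
            (uni_hasDist_iff n hn0 a ha v ya).mpr rfl⟩
        · exact ⟨b, by rw [hD]; exact Set.mem_insert_iff.mpr (Or.inr rfl),
            (uni_hasDist_iff n hn0 b hb v yb).mpr rfl⟩
    have : dWeight (uniArc n) D f v = ∑ y : Fin n, if y = ya ∨ y = yb then f y else 0 := by
      unfold dWeight
      refine Finset.sum_congr rfl fun y _ => ?_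
      rw [if_congr (hmem y) rfl rfl]
    rw [this]
    have : (∑ y : Fin n, if y = ya ∨ y = yb then f y else 0)
        = ∑ y : Fin n, if y ∈ ({ya, yb} : Finset (Fin n)) then f y else 0 := by
      refine Finset.sum_congr rfl fun y _ => if_congr (by simp) rfl rfl
    rw [this, Finset.sum_ite_mem, Finset.univ_inter, Finset.sum_pair hyane, hfval, hfval]
  -- injectivity
  intro v w hvw
  simp only [hweight] at hvw
  have h1 : ((v : ℕ) + a) % n + ((v : ℕ) + b) % n = ((w : ℕ) + a) % n + ((w : ℕ) + b) % n := by
    omega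
  have h2 : ((v : ℕ) + a) + ((v : ℕ) + b) ≡ ((w : ℕ) + a) + ((w : ℕ) + b) [MOD n] := by
    calc ((v : ℕ) + a) + ((v : ℕ) + b)
        ≡ ((v : ℕ) + a) % n + ((v : ℕ) + b) % n [MOD n] :=
          ((Nat.mod_modEq _ n).add (Nat.mod_modEq _ n)).symm
      _ = ((w : ℕ) + a) % n + ((w : ℕ) + b) % n := h1
      _ ≡ ((w : ℕ) + a) + ((w : ℕ) + b) [MOD n] := (Nat.mod_modEq _ n).add (Nat.mod_modEq _ n)
  have h3 : 2 * (v : ℕ) + (a + b) ≡ 2 * (w : ℕ) + (a + b) [MOD n] := by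
    have e1 : ((v : ℕ) + a) + ((v : ℕ) + b) = 2 * (v : ℕ) + (a + b) := by ring
    have e2 : ((w : ℕ) + a) + ((w : ℕ) + b) = 2 * (w : ℕ) + (a + b) := by ring
    rwa [e1, e2] at h2
  have h4 : 2 * (v : ℕ) ≡ 2 * (w : ℕ) [MOD n] := h3.add_right_cancel' (a + b)
  have hcop : Nat.Coprime 2 n := by
    refine (Nat.Prime.coprime_iff_not_dvd Nat.prime_two).mpr fun hdvd => ?_
    have := Nat.odd_iff.mp hodd
    omega
  have h5 : (v : ℕ) ≡ (w : ℕ) [MOD n] := (Nat.ModEq.cancel_left_of_coprime (by simpa using hcop.gcd_eq_one) h4)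
  have h6 : (v : ℕ) % n = (w : ℕ) % n := h5
  rw [Nat.mod_eq_of_lt v.isLt, Nat.mod_eq_of_lt w.isLt] at h6
  exact Fin.ext h6
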